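/- A finite simple graph G is locally {S₂}-decomposable if and only if G is chordal, where S₂ is the edgeless graph on two vertices. Equivalently: G has no induced cycle of length at least 4 if and only if for every vertex v, every pair of non-adjacent neighbors x, y of v, and every connected component C of G − N[v], at least one of x, y has no neighbor in C. -/

import Mathlib

open SimpleGraph

set_option linter.unreachableTactic false
set_option linter.unnecessarySeqFocus false
set_option linter.unusedTactic false
set_option linter.unnecessarySimpa false


lemma finSubVal {n : ℕ} (a b : Fin n) :
    (a - b).val = if b.val ≤ a.val then a.val - b.val else a.val + n - b.val := by
  rcases n with _ | n
  · exact a.elim0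
  rw [Fin.sub_def]
  simp only
  split
  · next h =>
    have : (n + 1 - b.val + a.val) = (a.val - b.val) + (n + 1) := by omega
    rw [this, Nat.add_mod_right, Nat.mod_eq_of_lt (by omega)]
  · next h =>
    rw [Nat.mod_eq_of_lt (by omega)]
    omega

lemma exists_cycleGraph_emb {V : Type*} (G : SimpleGraph V) (n : ℕ) (hn : 4 ≤ n) (e : ℕ → V)
    (hinj : ∀ i j, i < n → j < n → e i = e j → i = j)
    (hadj : ∀ i j, i < n → j < n →
      (G.Adj (e i) (e j) ↔ (j = i + 1 ∨ i = j + 1 ∨ (i = 0 ∧ j = n - 1) ∨ (j = 0 ∧ i = n - 1)))) :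
    Nonempty (SimpleGraph.cycleGraph n ↪g G) := by
  refine ⟨⟨⟨fun i => e i.val, fun a b h => Fin.ext (hinj _ _ a.isLt b.isLt h)⟩, ?_⟩⟩
  intro a b
  show G.Adj (e a.val) (e b.val) ↔ (SimpleGraph.cycleGraph n).Adj a b
  rw [hadj _ _ a.isLt b.isLt, cycleGraph_adj', finSubVal, finSubVal]
  have ha := a.isLt; have hb := b.isLt
  split_ifs <;> omega

/-- Auxiliary function: the vertex sequence of the cycle to be constructed. -/
def cycFun {V : Type*} (v x y : V) (d : ℕ → V) (k₀ : ℕ) (m : ℕ) : V :=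
  if m = 0 then v else if m = 1 then x else if m ≤ k₀ + 2 then d (m - 2) else y

lemma fwd {V : Type*} (G : SimpleGraph V) (v x y : V) (hvx : G.Adj v x) (hvy : G.Adj v y)
    (hxy : x ≠ y) (hnxy : ¬ G.Adj x y)
    (w1 w2 : {w : V | ¬ (w = v ∨ G.Adj v w)})
    (hr : (G.induce {w : V | ¬ (w = v ∨ G.Adj v w)}).Reachable w1 w2)
    (hxw1 : G.Adj x ↑w1) (hyw2 : G.Adj y ↑w2) :
    ∃ n : ℕ, 4 ≤ n ∧ Nonempty (SimpleGraph.cycleGraph n ↪g G) := by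
  classical
  obtain ⟨p⟩ := hr
  have hex : ∃ k : ℕ, ∃ d : ℕ → V,
      (∀ i, i ≤ k → d i ≠ v ∧ ¬ G.Adj v (d i)) ∧
      G.Adj x (d 0) ∧ G.Adj y (d k) ∧ ∀ i, i < k → G.Adj (d i) (d (i + 1)) := by
    refine ⟨p.length, fun i => ↑(p.getVert i), fun i _ => ?_, ?_, ?_, ?_⟩
    · beta_reduce
      have hm := (p.getVert i).2
      simp only [Set.mem_setOf_eq] at hm
      exact ⟨fun h => hm (Or.inl h), fun h => hm (Or.inr h)⟩
    · beta_reduce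
      rw [p.getVert_zero]; exact hxw1
    · beta_reduce
      rw [p.getVert_length]; exact hyw2
    · intro i hi
      beta_reduce
      exact comap_adj.mp (p.adj_getVert_succ hi)
  set k₀ := Nat.find hex with hk₀def
  obtain ⟨d, hdS, hdx, hdy, hdadj⟩ : ∃ d : ℕ → V,
      (∀ i, i ≤ k₀ → d i ≠ v ∧ ¬ G.Adj v (d i)) ∧
      G.Adj x (d 0) ∧ G.Adj y (d k₀) ∧ ∀ i, i < k₀ → G.Adj (d i) (d (i + 1)) :=
    Nat.find_spec hex
  have hmin : ∀ m, m < k₀ → ¬ ∃ d : ℕ → V,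
      (∀ i, i ≤ m → d i ≠ v ∧ ¬ G.Adj v (d i)) ∧
      G.Adj x (d 0) ∧ G.Adj y (d m) ∧ ∀ i, i < m → G.Adj (d i) (d (i + 1)) :=
    fun m hm => Nat.find_min hex hm
  clear_value k₀
  clear hk₀def hex p
  -- basic facts
  have hdv : ∀ i, i ≤ k₀ → d i ≠ v := fun i hi => (hdS i hi).1
  have hdnv : ∀ i, i ≤ k₀ → ¬ G.Adj v (d i) := fun i hi => (hdS i hi).2
  have hdnex : ∀ i, i ≤ k₀ → x ≠ d i := by
    intro i hi h
    exact hdnv i hi (h ▸ hvx)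
  have hdney : ∀ i, i ≤ k₀ → y ≠ d i := by
    intro i hi h
    exact hdnv i hi (h ▸ hvy)
  have hdnx : ∀ i, 0 < i → i ≤ k₀ → ¬ G.Adj x (d i) := by
    intro i hi0 hik hadj
    refine hmin (k₀ - i) (by omega) ⟨fun m => d (m + i), fun m hm => ?_, ?_, ?_, ?_⟩
    · beta_reduce
      exact hdS (m + i) (by omega)
    · beta_reduce
      simpa using hadj
    · beta_reduce
      rw [show k₀ - i + i = k₀ from by omega]
      exact hdy
    · intro m hm
      beta_reduce
      rw [show m + 1 + i = m + i + 1 from by omega]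
      exact hdadj (m + i) (by omega)
  have hdny : ∀ i, i < k₀ → ¬ G.Adj y (d i) := by
    intro i hi hadj
    exact hmin i hi ⟨d, fun m hm => hdS m (by omega), hdx, hadj, fun m hm => hdadj m (by omega)⟩
  have hdji : ∀ i j, i < j → j ≤ k₀ → G.Adj (d i) (d j) → j = i + 1 := by
    intro i j hij hjk hadj
    by_contra hne
    refine hmin (i + 1 + (k₀ - j)) (by omega)
      ⟨fun m => if m ≤ i then d m else d (m - (i + 1) + j), fun m hm => ?_, ?_, ?_, ?_⟩
    · beta_reduce
      by_cases hc : m ≤ i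
      · rw [if_pos hc]; exact hdS m (by omega)
      · rw [if_neg hc]; exact hdS (m - (i + 1) + j) (by omega)
    · beta_reduce
      rw [if_pos (Nat.zero_le i)]; exact hdx
    · beta_reduce
      rw [if_neg (show ¬ (i + 1 + (k₀ - j) ≤ i) from by omega)]
      rw [show i + 1 + (k₀ - j) - (i + 1) + j = k₀ from by omega]
      exact hdy
    · intro m hm
      beta_reduce
      rcases lt_trichotomy m i with h | h | h
      · rw [if_pos (le_of_lt h), if_pos (show m + 1 ≤ i from by omega)]
        exact hdadj m (by omega)
      · subst h
        rw [if_pos le_rfl, if_neg (show ¬ m + 1 ≤ m from by omega)]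
        rw [show m + 1 - (m + 1) + j = j from by omega]
        exact hadj
      · rw [if_neg (show ¬ m ≤ i from by omega), if_neg (show ¬ m + 1 ≤ i from by omega)]
        rw [show m + 1 - (i + 1) + j = (m - (i + 1) + j) + 1 from by omega]
        exact hdadj (m - (i + 1) + j) (by omega)
  have hdinj : ∀ i j, i < j → j ≤ k₀ → d i ≠ d j := by
    intro i j hij hjk heq
    rcases eq_or_lt_of_le hjk with rfl | hjlt
    · exact hdny i hij (heq ▸ hdy)
    · refine hmin (i + (k₀ - j)) (by omega)
        ⟨fun m => if m ≤ i then d m else d (m - i + j), fun m hm => ?_, ?_, ?_, ?_⟩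
      · beta_reduce
        by_cases hc : m ≤ i
        · rw [if_pos hc]; exact hdS m (by omega)
        · rw [if_neg hc]; exact hdS (m - i + j) (by omega)
      · beta_reduce
        rw [if_pos (Nat.zero_le i)]; exact hdx
      · beta_reduce
        rw [if_neg (show ¬ (i + (k₀ - j) ≤ i) from by omega)]
        rw [show i + (k₀ - j) - i + j = k₀ from by omega]
        exact hdy
      · intro m hm
        beta_reduce
        rcases lt_trichotomy m i with h | h | h
        · rw [if_pos (le_of_lt h), if_pos (show m + 1 ≤ i from by omega)]
          exact hdadj m (by omega)
        · subst h
          rw [if_pos le_rfl, if_neg (show ¬ m + 1 ≤ m from by omega)]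
          rw [show m + 1 - m + j = j + 1 from by omega, heq]
          exact hdadj j (by omega)
        · rw [if_neg (show ¬ m ≤ i from by omega), if_neg (show ¬ m + 1 ≤ i from by omega)]
          rw [show m + 1 - i + j = (m - i + j) + 1 from by omega]
          exact hdadj (m - i + j) (by omega)
  -- the cycle function
  have e0 : cycFun v x y d k₀ 0 = v := rfl
  have e1 : cycFun v x y d k₀ 1 = x := rfl
  have emid : ∀ m, 2 ≤ m → m ≤ k₀ + 2 → cycFun v x y d k₀ m = d (m - 2) := by
    intro m h1 h2
    unfold cycFun
    rw [if_neg (show ¬ m = 0 from by omega), if_neg (show ¬ m = 1 from by omega), if_pos h2]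
  have elast : ∀ m, k₀ + 2 < m → cycFun v x y d k₀ m = y := by
    intro m h1
    unfold cycFun
    rw [if_neg (show ¬ m = 0 from by omega), if_neg (show ¬ m = 1 from by omega),
      if_neg (show ¬ m ≤ k₀ + 2 from by omega)]
  have hclass : ∀ m, m < k₀ + 4 → m = 0 ∨ m = 1 ∨ (2 ≤ m ∧ m ≤ k₀ + 2) ∨ m = k₀ + 3 := by
    intro m hm; omega
  have hvnex : v ≠ x := G.ne_of_adj hvx
  have hvney : v ≠ y := G.ne_of_adj hvy
  -- injectivity (strict version)
  have key : ∀ i j, j < k₀ + 4 → i < j → cycFun v x y d k₀ i ≠ cycFun v x y d k₀ j := by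
    intro i j hj hij heq
    rcases hclass i (by omega) with rfl | rfl | ⟨hi1, hi2⟩ | rfl <;>
      rcases hclass j hj with rfl | rfl | ⟨hj1, hj2⟩ | rfl
    · omega
    · rw [e0, e1] at heq; exact hvnex heq
    · rw [e0, emid j hj1 hj2] at heq; exact hdv (j - 2) (by omega) heq.symm
    · rw [e0, elast (k₀ + 3) (by omega)] at heq; exact hvney heq
    · omega
    · omega
    · rw [e1, emid j hj1 hj2] at heq; exact hdnex (j - 2) (by omega) heq
    · rw [e1, elast (k₀ + 3) (by omega)] at heq; exact hxy heq
    · omega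
    · omega
    · rw [emid i hi1 hi2, emid j hj1 hj2] at heq
      exact hdinj (i - 2) (j - 2) (by omega) (by omega) heq
    · rw [emid i hi1 hi2, elast (k₀ + 3) (by omega)] at heq
      exact hdney (i - 2) (by omega) heq.symm
    · omega
    · omega
    · omega
    · omega
  have einj : ∀ i j, i < k₀ + 4 → j < k₀ + 4 → cycFun v x y d k₀ i = cycFun v x y d k₀ j → i = j := by
    intro i j hi hj heq
    rcases lt_trichotomy i j with h | h | h
    · exact absurd heq (key i j hj h)
    · exact h
    · exact absurd heq.symm (key j i hi h)
  -- adjacency characterization (i ≤ j version)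
  have eadj2 : ∀ i j, j < k₀ + 4 → i ≤ j →
      (G.Adj (cycFun v x y d k₀ i) (cycFun v x y d k₀ j) ↔ (j = i + 1 ∨ (i = 0 ∧ j = k₀ + 3))) := by
    intro i j hj hij
    rcases hclass i (by omega) with rfl | rfl | ⟨hi1, hi2⟩ | rfl <;>
      rcases hclass j hj with rfl | rfl | ⟨hj1, hj2⟩ | rfl
    · rw [e0]; exact iff_of_false G.irrefl (by omega)
    · rw [e0, e1]; exact iff_of_true hvx (by omega)
    · rw [e0, emid j hj1 hj2]
      exact iff_of_false (hdnv (j - 2) (by omega)) (by omega)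
    · rw [e0, elast (k₀ + 3) (by omega)]; exact iff_of_true hvy (by omega)
    · omega
    · rw [e1]; exact iff_of_false G.irrefl (by omega)
    · rw [e1, emid j hj1 hj2]
      constructor
      · intro h
        left
        rcases Nat.eq_or_lt_of_le hj1 with h2 | h2
        · omega
        · exact absurd h (hdnx (j - 2) (by omega) (by omega))
      · intro h
        rw [show j - 2 = 0 from by omega]
        exact hdx
    · rw [e1, elast (k₀ + 3) (by omega)]
      exact iff_of_false hnxy (by omega)
    · omega
    · omega
    · rw [emid i hi1 hi2, emid j hj1 hj2]
      constructor
      · intro h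
        rcases Nat.eq_or_lt_of_le hij with h2 | h2
        · subst h2; exact absurd h G.irrefl
        · have := hdji (i - 2) (j - 2) (by omega) (by omega) h
          omega
      · intro h
        rw [show j - 2 = (i - 2) + 1 from by omega]
        exact hdadj (i - 2) (by omega)
    · rw [emid i hi1 hi2, elast (k₀ + 3) (by omega)]
      constructor
      · intro h
        rcases Nat.eq_or_lt_of_le hi2 with h2 | h2
        · omega
        · exact absurd ((G.adj_comm _ _).mp h) (hdny (i - 2) (by omega))
      · intro h
        rw [G.adj_comm, show i - 2 = k₀ from by omega]
        exact hdy
    · omega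
    · omega
    · omega
    · rw [elast (k₀ + 3) (by omega)]
      exact iff_of_false G.irrefl (by omega)
  have eadj : ∀ i j, i < k₀ + 4 → j < k₀ + 4 →
      (G.Adj (cycFun v x y d k₀ i) (cycFun v x y d k₀ j) ↔
        (j = i + 1 ∨ i = j + 1 ∨ (i = 0 ∧ j = (k₀ + 4) - 1) ∨ (j = 0 ∧ i = (k₀ + 4) - 1))) := by
    intro i j hi hj
    rcases le_total i j with h | h
    · rw [eadj2 i j hj h]; omega
    · rw [G.adj_comm, eadj2 j i hi h]; omega
  exact ⟨k₀ + 4, by omega, exists_cycleGraph_emb G (k₀ + 4) (by omega) (cycFun v x y d k₀) einj eadj⟩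


lemma revAux {V : Type*} [Fintype V] (G : SimpleGraph V)
    (hloc : ∀ v x y : V, G.Adj v x → G.Adj v y → x ≠ y → ¬ G.Adj x y →
      ∀ C : (G.induce {w : V | ¬ (w = v ∨ G.Adj v w)}).ConnectedComponent,
        (∀ w : {w : V | ¬ (w = v ∨ G.Adj v w)},
          (G.induce {w : V | ¬ (w = v ∨ G.Adj v w)}).connectedComponentMk w = C →
          ¬ G.Adj x ↑w) ∨
        (∀ w : {w : V | ¬ (w = v ∨ G.Adj v w)},
          (G.induce {w : V | ¬ (w = v ∨ G.Adj v w)}).connectedComponentMk w = C →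
          ¬ G.Adj y ↑w))
    (hex : ∃ n : ℕ, 4 ≤ n ∧ Nonempty (SimpleGraph.cycleGraph n ↪g G)) : False := by
  obtain ⟨n, hn, ⟨f⟩⟩ := hex
  obtain ⟨m, rfl⟩ : ∃ m, n = m + 4 := ⟨n - 4, by omega⟩
  have fadj : ∀ a b : Fin (m + 4), G.Adj (f a) (f b) ↔
      ((a.val = b.val + 1 ∨ b.val = a.val + 1) ∨ (a.val = 0 ∧ b.val = m + 3) ∨ (b.val = 0 ∧ a.val = m + 3)) := by
    intro a b
    rw [f.map_adj_iff, cycleGraph_adj', finSubVal, finSubVal]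
    have := a.isLt; have := b.isLt
    split_ifs <;> omega
  have finj : Function.Injective f := f.injective
  set v : V := f ⟨0, by omega⟩ with hv
  have memS : ∀ a : Fin (m + 4), 2 ≤ a.val → a.val ≤ m + 2 →
      (f a) ∈ {w : V | ¬ (w = v ∨ G.Adj v w)} := by
    intro a h1 h2
    simp only [Set.mem_setOf_eq]
    rintro (heq | hadj)
    · have h3 := finj heq
      have h4 : a.val = (⟨0, by omega⟩ : Fin (m + 4)).val := by rw [h3]
      simp only [Fin.val_mk] at h4
      omega
    · rw [fadj] at hadj
      simp only [Fin.val_mk] at hadj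
      omega
  have h2mem : (f ⟨2, by omega⟩) ∈ {w : V | ¬ (w = v ∨ G.Adj v w)} :=
    memS _ (by simp only [Fin.val_mk] <;> omega) (by simp only [Fin.val_mk] <;> omega)
  -- reachability chain
  have chain : ∀ j : ℕ, (hj : 2 ≤ j) → (h : j ≤ m + 2) →
      (G.induce {w : V | ¬ (w = v ∨ G.Adj v w)}).Reachable
        ⟨f ⟨2, by omega⟩, h2mem⟩
        ⟨f ⟨j, by omega⟩, memS _ (by simp only [Fin.val_mk] <;> omega) (by simp only [Fin.val_mk] <;> omega)⟩ := by
    intro j hj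
    induction j, hj using Nat.le_induction with
    | base => intro h; exact Reachable.refl _
    | succ j hj ih =>
      intro h
      refine (ih (by omega)).trans (Adj.reachable ?_)
      rw [comap_adj]
      simp only [Function.Embedding.coe_subtype]
      rw [fadj]
      simp only [Fin.val_mk] <;> first | omega | tauto
  have hvx : G.Adj v (f ⟨1, by omega⟩) := by
    rw [fadj]
    simp only [Fin.val_mk] <;> first | omega | tauto
  have hvy : G.Adj v (f ⟨m + 3, by omega⟩) := by
    rw [fadj]
    simp only [Fin.val_mk] <;> first | omega | tauto
  have hne : f ⟨1, by omega⟩ ≠ f ⟨m + 3, by omega⟩ := by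
    intro h
    have h2 := congrArg Fin.val (finj h)
    simp only [Fin.val_mk] at h2
    omega
  have hnxy : ¬ G.Adj (f ⟨1, by omega⟩) (f ⟨m + 3, by omega⟩) := by
    rw [fadj]
    simp only [Fin.val_mk] <;> first | omega | tauto
  rcases hloc v (f ⟨1, by omega⟩) (f ⟨m + 3, by omega⟩) hvx hvy hne hnxy
      ((G.induce {w : V | ¬ (w = v ∨ G.Adj v w)}).connectedComponentMk ⟨f ⟨2, by omega⟩, h2mem⟩) with h | h
  · refine h ⟨f ⟨2, by omega⟩, h2mem⟩ rfl ?_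
    rw [fadj]
    simp only [Fin.val_mk] <;> first | omega | tauto
  · refine h ⟨f ⟨m + 2, by omega⟩,
      memS _ (by simp only [Fin.val_mk] <;> omega) (by simp only [Fin.val_mk] <;> omega)⟩ ?_ ?_
    · exact ConnectedComponent.sound (chain (m + 2) (by omega) le_rfl).symm
    · rw [fadj]
      simp only [Fin.val_mk] <;> first | omega | tauto


/-- `G` is locally `{S₂}`-decomposable iff `G` is chordal, stated in the
equivalent explicit form: `G` has no induced cycle (hole) of length at least 4 iff
for every vertex `v`, every pair of non-adjacent neighbors `x, y` of `v`, and every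
connected component `C` of `G − N[v]`, at least one of `x, y` has no neighbor in `C`. -/
theorem stmt_4 {V : Type*} [Fintype V] (G : SimpleGraph V) :
    (¬ ∃ n : ℕ, 4 ≤ n ∧ Nonempty (SimpleGraph.cycleGraph n ↪g G)) ↔
    (∀ v x y : V, G.Adj v x → G.Adj v y → x ≠ y → ¬ G.Adj x y →
      ∀ C : (G.induce {w : V | ¬ (w = v ∨ G.Adj v w)}).ConnectedComponent,
        (∀ w : {w : V | ¬ (w = v ∨ G.Adj v w)},
          (G.induce {w : V | ¬ (w = v ∨ G.Adj v w)}).connectedComponentMk w = C →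
          ¬ G.Adj x ↑w) ∨
        (∀ w : {w : V | ¬ (w = v ∨ G.Adj v w)},
          (G.induce {w : V | ¬ (w = v ∨ G.Adj v w)}).connectedComponentMk w = C →
          ¬ G.Adj y ↑w)) := by
  constructor
  · intro hno v x y hvx hvy hxy hnxy C
    by_contra hcon
    push_neg at hcon
    obtain ⟨⟨w1, hw1C, hxw1⟩, w2, hw2C, hyw2⟩ := hcon
    exact hno (fwd G v x y hvx hvy hxy hnxy w1 w2
      (ConnectedComponent.exact (hw1C.trans hw2C.symm)) hxw1 hyw2)
  · intro hloc hex
    exact revAux G hloc hex
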